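/- Let G = ([n], E) be a directed graph containing all loops (d,d) and no other directed cycles. Then there is a unique orientation m of the n-cube with m(∅) = ∅ such that for all d, d' ∈ [n] and all vertices v, the membership d' ∈ m(v) differs from d' ∈ m(v Δ {d}) if and only if (d,d') ∈ E. -/

import Mathlib

open scoped symmDiff

/-- An orientation of the `n`-cube: `d ∈ o v` iff `d ∉ o (v Δ {d})`. -/
def IsOrientation (n : ℕ) (o : Finset (Fin n) → Finset (Fin n)) : Prop :=
  ∀ (v : Finset (Fin n)) (d : Fin n), d ∈ o v ↔ d ∉ o (v ∆ {d})

/-- The graph `E` has no directed cycle apart from loops. -/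
def NoNonloopCycle (n : ℕ) (E : Fin n → Fin n → Prop) : Prop :=
  ∀ d : Fin n, ¬ Relation.TransGen (fun a b => E a b ∧ a ≠ b) d d

lemma zmod2_cases (x : ZMod 2) : x = 0 ∨ x = 1 := by revert x; decide

open Classical in
noncomputable def matousekSum (n : ℕ) (E : Fin n → Fin n → Prop)
    (v : Finset (Fin n)) (d' : Fin n) : ZMod 2 :=
  ∑ d ∈ v, if E d d' then 1 else 0

open Classical in
noncomputable def matousekMap (n : ℕ) (E : Fin n → Fin n → Prop)
    (v : Finset (Fin n)) : Finset (Fin n) :=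
  Finset.univ.filter (fun d' => matousekSum n E v d' = 1)

lemma symmDiff_singleton_mem {n : ℕ} {v : Finset (Fin n)} {d : Fin n} (h : d ∈ v) :
    v ∆ {d} = v.erase d := by
  ext x
  simp only [Finset.mem_symmDiff, Finset.mem_erase, Finset.mem_singleton]
  constructor
  · rintro (⟨h1, h2⟩ | ⟨rfl, h2⟩) <;> tauto
  · rintro ⟨h1, h2⟩; tauto

lemma symmDiff_singleton_not_mem {n : ℕ} {v : Finset (Fin n)} {d : Fin n} (h : d ∉ v) :
    v ∆ {d} = insert d v := by
  ext x
  simp only [Finset.mem_symmDiff, Finset.mem_insert, Finset.mem_singleton]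
  constructor
  · rintro (⟨h1, h2⟩ | ⟨rfl, _⟩) <;> tauto
  · rintro (rfl | h1)
    · tauto
    · exact Or.inl ⟨h1, fun e => h (e ▸ h1)⟩

open Classical in
lemma matousekSum_symmDiff (n : ℕ) (E : Fin n → Fin n → Prop)
    (v : Finset (Fin n)) (d d' : Fin n) :
    matousekSum n E (v ∆ {d}) d' = matousekSum n E v d' + (if E d d' then 1 else 0) := by
  have hself : ∀ x : ZMod 2, x + x = 0 := by decide
  by_cases h : d ∈ v
  · rw [symmDiff_singleton_mem h]
    have key := Finset.sum_erase_add v (fun x => if E x d' then (1 : ZMod 2) else 0) h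
    unfold matousekSum
    have : (∑ x ∈ v.erase d, if E x d' then (1 : ZMod 2) else 0)
        = (∑ x ∈ v.erase d, if E x d' then (1 : ZMod 2) else 0)
          + ((if E d d' then (1 : ZMod 2) else 0) + (if E d d' then (1 : ZMod 2) else 0)) := by
      rw [hself]; ring
    rw [this, ← add_assoc, key]
  · rw [symmDiff_singleton_not_mem h]
    unfold matousekSum
    rw [Finset.sum_insert h]; ring

theorem stmt2 (n : ℕ) (E : Fin n → Fin n → Prop)
    (hloops : ∀ d, E d d) (hacyc : NoNonloopCycle n E) :
    ∃! m : Finset (Fin n) → Finset (Fin n),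
      IsOrientation n m ∧ m ∅ = ∅ ∧
      ∀ (d d' : Fin n) (v : Finset (Fin n)),
        (Xor' (d' ∈ m v) (d' ∈ m (v ∆ {d})) ↔ E d d') := by
  classical
  set m := matousekMap n E with hm
  have hmem : ∀ v d', d' ∈ m v ↔ matousekSum n E v d' = 1 := by
    intro v d'; simp [hm, matousekMap]
  have hflip : ∀ v d d', (d' ∈ m (v ∆ {d})) ↔ (Xor' (E d d') (d' ∈ m v)) := by
    intro v d d'
    rw [hmem, hmem, matousekSum_symmDiff]
    by_cases h : E d d'
    · rcases zmod2_cases (matousekSum n E v d') with h0 | h0 <;>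
        rw [h0] <;> simp [h, Xor'] <;> decide
    · simp [h, Xor']
  have hxor : ∀ (d d' : Fin n) (v : Finset (Fin n)),
      Xor' (d' ∈ m v) (d' ∈ m (v ∆ {d})) ↔ E d d' := by
    intro d d' v
    rw [hflip]
    by_cases h : E d d' <;> by_cases h2 : d' ∈ m v <;> simp [h, h2, Xor']
  have hempty : m ∅ = ∅ := by
    ext d'; simp [hm, matousekMap, matousekSum]
  have horient : IsOrientation n m := by
    intro v d
    have := hxor d d v
    rw [iff_true_intro (hloops d)] at this
    rcases this.mpr trivial with ⟨h1, h2⟩ | ⟨h1, h2⟩ <;> tauto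
  refine ⟨m, ⟨horient, hempty, hxor⟩, ?_⟩
  rintro m' ⟨-, hempty', hxor'⟩
  funext v
  induction v using Finset.strongInduction with
  | _ v ih =>
    rcases v.eq_empty_or_nonempty with rfl | ⟨d, hd⟩
    · rw [hempty', hempty]
    · have hsd : v ∆ {d} = v.erase d := symmDiff_singleton_mem hd
      have hih : m' (v.erase d) = m (v.erase d) := ih _ (Finset.erase_ssubset hd)
      ext d'
      have h1 := hxor' d d' v
      have h2 := hxor d d' v
      rw [hsd, hih] at h1
      rw [hsd] at h2
      rw [← h2] at h1
      by_cases hb : d' ∈ m (v.erase d) <;>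
        by_cases hc : d' ∈ m v <;> simp [hb, hc, Xor', Xor] at h1 ⊢ <;> tauto
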